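/- Fix τ ∈ ℕ. There exists a constant c_τ > 0 such that for every n ∈ ℕ and every nonzero w ∈ ℤ[√p_1, ..., √p_τ] with all coordinates bounded by n in absolute value (i.e. M(w) ≤ n), one has |w| ≥ c_τ · n^{-(2^τ − 1)}. -/

import Mathlib

/-- The `i`-th prime (0-indexed: `nthPrime 0 = 2`). -/
noncomputable def nthPrime (i : ℕ) : ℕ := Nat.nth Nat.Prime i

/-- The squarefree divisor of `p_1 ⋯ p_τ` indexed by `s ∈ {0,1}^τ`. -/
noncomputable def sqfDiv (τ : ℕ) (s : Fin τ → Bool) : ℕ :=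
  ∏ j, if s j then nthPrime j else 1

lemma one_le_nthPrime (i : ℕ) : 1 ≤ nthPrime i := (Nat.prime_nth_prime i).one_lt.le

lemma one_le_sqfDiv (τ : ℕ) (s : Fin τ → Bool) : 1 ≤ sqfDiv τ s :=
  Finset.one_le_prod' fun j _ => by split <;> simp [one_le_nthPrime]

lemma sqfDiv_le (τ : ℕ) (s : Fin τ → Bool) : sqfDiv τ s ≤ ∏ j : Fin τ, nthPrime j :=
  Finset.prod_le_prod' fun j _ => by split <;> simp [one_le_nthPrime]

lemma sqfDiv_mul (τ : ℕ) (s t : Fin τ → Bool) :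
    sqfDiv τ s * sqfDiv τ t =
      (sqfDiv τ (fun j => s j && t j)) ^ 2 * sqfDiv τ (fun j => xor (s j) (t j)) := by
  unfold sqfDiv
  rw [← Finset.prod_mul_distrib, ← Finset.prod_pow, ← Finset.prod_mul_distrib]
  refine Finset.prod_congr rfl fun j _ => ?_
  cases hs : s j <;> cases ht : t j <;> simp [hs, ht] <;> try ring

lemma sqrt_sqfDiv_mul (τ : ℕ) (s t : Fin τ → Bool) :
    Real.sqrt (sqfDiv τ s) * Real.sqrt (sqfDiv τ t) =
      (sqfDiv τ (fun j => s j && t j) : ℝ) * Real.sqrt (sqfDiv τ (fun j => xor (s j) (t j))) := by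
  rw [← Real.sqrt_mul (by positivity), ← Nat.cast_mul, sqfDiv_mul]
  push_cast
  rw [Real.sqrt_mul (by positivity), Real.sqrt_sq (by positivity)]

lemma sqfDiv_snoc (τ : ℕ) (s' : Fin τ → Bool) (x : Bool) :
    sqfDiv (τ + 1) (Fin.snoc s' x) = sqfDiv τ s' * (if x then nthPrime τ else 1) := by
  unfold sqfDiv
  rw [Fin.prod_univ_castSucc]
  simp [Fin.snoc_castSucc, Fin.snoc_last]

noncomputable def Sw (τ : ℕ) (c : (Fin τ → Bool) → ℤ) : ℝ :=
  ∑ s, (c s : ℝ) * Real.sqrt (sqfDiv τ s)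

lemma Sw_abs_le (τ : ℕ) (n : ℕ) (c : (Fin τ → Bool) → ℤ) (h : ∀ s, |c s| ≤ (n : ℤ)) :
    |Sw τ c| ≤ 2 ^ τ * n * Real.sqrt ((∏ j : Fin τ, nthPrime j : ℕ) : ℝ) := by
  unfold Sw
  calc |∑ s, (c s : ℝ) * Real.sqrt (sqfDiv τ s)|
      ≤ ∑ s, |(c s : ℝ) * Real.sqrt (sqfDiv τ s)| := Finset.abs_sum_le_sum_abs _ _
    _ ≤ ∑ _s : Fin τ → Bool, (n : ℝ) * Real.sqrt ((∏ j : Fin τ, nthPrime j : ℕ) : ℝ) := by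
        refine Finset.sum_le_sum fun s _ => ?_
        rw [abs_mul, abs_of_nonneg (Real.sqrt_nonneg _)]
        have h1 : |(c s : ℝ)| ≤ (n : ℝ) := by exact_mod_cast h s
        have h2 : Real.sqrt (sqfDiv τ s) ≤ Real.sqrt ((∏ j : Fin τ, nthPrime j : ℕ) : ℝ) :=
          Real.sqrt_le_sqrt (by exact_mod_cast sqfDiv_le τ s)
        exact mul_le_mul h1 h2 (Real.sqrt_nonneg _) (by positivity)
    _ = 2 ^ τ * n * Real.sqrt ((∏ j : Fin τ, nthPrime j : ℕ) : ℝ) := by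
        rw [Finset.sum_const, Finset.card_univ]
        simp [Fintype.card_fun, mul_assoc]

lemma key_expand (τ : ℕ) (p : ℕ) (a b : (Fin τ → Bool) → ℤ) :
    Sw τ a ^ 2 - p * Sw τ b ^ 2 =
    Sw τ (fun u => ∑ s, (a s * a (fun j => xor (s j) (u j))
        - (p : ℤ) * b s * b (fun j => xor (s j) (u j)))
        * (sqfDiv τ (fun j => s j && xor (s j) (u j)) : ℤ)) := by
  have hxor : ∀ x y : Bool, xor x (xor x y) = y := by decide
  have L : Sw τ a ^ 2 - p * Sw τ b ^ 2
      = ∑ s, ∑ t, ((a s * a t - (p : ℤ) * b s * b t : ℤ) : ℝ)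
          * (Real.sqrt (sqfDiv τ s) * Real.sqrt (sqfDiv τ t)) := by
    unfold Sw
    rw [sq, sq, Finset.sum_mul_sum, Finset.sum_mul_sum, Finset.mul_sum, ← Finset.sum_sub_distrib]
    refine Finset.sum_congr rfl fun s _ => ?_
    rw [Finset.mul_sum, ← Finset.sum_sub_distrib]
    refine Finset.sum_congr rfl fun t _ => ?_
    push_cast
    ring
  rw [L]
  have L2 : ∀ s : Fin τ → Bool,
      (∑ t, ((a s * a t - (p : ℤ) * b s * b t : ℤ) : ℝ)
          * (Real.sqrt (sqfDiv τ s) * Real.sqrt (sqfDiv τ t)))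
      = ∑ u, ((a s * a (fun j => xor (s j) (u j))
            - (p : ℤ) * b s * b (fun j => xor (s j) (u j)) : ℤ) : ℝ)
          * ((sqfDiv τ (fun j => s j && xor (s j) (u j)) : ℝ) * Real.sqrt (sqfDiv τ u)) := by
    intro s
    have hinv : Function.Involutive (fun u : Fin τ → Bool => fun j => xor (s j) (u j)) := by
      intro u; funext j; exact hxor _ _
    rw [← Fintype.sum_bijective _ hinv.bijective _ _ (fun u => ?_)]
    rw [sqrt_sqfDiv_mul]
    simp only [hxor]
  rw [Finset.sum_congr rfl fun s _ => L2 s, Finset.sum_comm]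
  unfold Sw
  refine Finset.sum_congr rfl fun u _ => ?_
  push_cast
  rw [Finset.sum_mul]
  refine Finset.sum_congr rfl fun s _ => ?_
  ring

lemma Sw_split (τ : ℕ) (c : (Fin (τ + 1) → Bool) → ℤ) :
    Sw (τ + 1) c = Sw τ (fun s => c (Fin.snoc s false))
      + Sw τ (fun s => c (Fin.snoc s true)) * Real.sqrt (nthPrime τ) := by
  unfold Sw
  rw [← Equiv.sum_comp (Fin.snocEquiv (fun _ => Bool))
    (fun s => (c s : ℝ) * Real.sqrt (sqfDiv (τ + 1) s)), Fintype.sum_prod_type, Fintype.sum_bool]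
  have he : ∀ (x : Bool) (s' : Fin τ → Bool),
      (Fin.snocEquiv (fun _ => Bool)) (x, s') = Fin.snoc s' x := fun x s' => by
    funext j
    rfl
  rw [add_comm, Finset.sum_mul]
  congr 1
  · refine Finset.sum_congr rfl fun s' _ => ?_
    rw [he, sqfDiv_snoc]
    simp
  · refine Finset.sum_congr rfl fun s' _ => ?_
    rw [he, sqfDiv_snoc]
    simp only [if_true, Nat.cast_mul]
    rw [Real.sqrt_mul (by positivity)]
    ring

set_option maxHeartbeats 1000000 in
theorem main (τ : ℕ) :
    ∃ cτ : ℝ, 0 < cτ ∧ ∀ n : ℕ, 1 ≤ n → ∀ c : (Fin τ → Bool) → ℤ,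
      (∀ s, |c s| ≤ (n : ℤ)) → Sw τ c ≠ 0 →
      cτ * (n : ℝ) ^ (-(2 ^ τ - 1 : ℤ)) ≤ |Sw τ c| := by
  induction τ with
  | zero =>
    refine ⟨1, one_pos, fun n hn c hc hne => ?_⟩
    have hS : Sw 0 c = ((∑ s, c s : ℤ) : ℝ) := by
      unfold Sw
      push_cast
      refine Finset.sum_congr rfl fun s _ => ?_
      simp [sqfDiv]
    rw [hS] at hne ⊢
    have h0 : (∑ s, c s : ℤ) ≠ 0 := fun h => hne (by rw [h]; simp)
    have h1 : (1 : ℤ) ≤ |∑ s, c s| := Int.one_le_abs h0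
    have h1' : (1 : ℝ) ≤ |((∑ s, c s : ℤ) : ℝ)| := by exact_mod_cast h1
    simpa using h1'
  | succ τ ih =>
    obtain ⟨c', hc'pos, ih⟩ := ih
    set p := nthPrime τ with hp
    set Pm : ℕ := ∏ j : Fin τ, nthPrime j with hPm
    have hPm1 : 1 ≤ Pm := Finset.one_le_prod' fun j _ => one_le_nthPrime j
    have hp1 : 1 ≤ p := one_le_nthPrime τ
    set K : ℕ := 2 ^ τ * (1 + p) * Pm with hK
    have hK1 : 1 ≤ K := Nat.one_le_iff_ne_zero.mpr (by positivity)
    have hKR1 : (1:ℝ) ≤ (K:ℝ) := by exact_mod_cast hK1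
    have hsp1 : (1:ℝ) ≤ Real.sqrt p := Real.one_le_sqrt.mpr (by exact_mod_cast hp1)
    have hsPm1 : (1:ℝ) ≤ Real.sqrt Pm := Real.one_le_sqrt.mpr (by exact_mod_cast hPm1)
    set C' : ℝ := 2 ^ τ * Real.sqrt Pm * (1 + Real.sqrt p) with hC'
    have h2t : (1:ℝ) ≤ 2 ^ τ := one_le_pow₀ one_le_two
    have hC'1 : (1:ℝ) ≤ C' := by
      have h12 : (1:ℝ) ≤ 2 ^ τ * Real.sqrt Pm := by nlinarith
      nlinarith [Real.sqrt_nonneg (p:ℝ)]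
    have hKR0 : (0:ℝ) < (K:ℝ) := lt_of_lt_of_le one_pos hKR1
    have h2z : (1:ℤ) ≤ 2 ^ τ := one_le_pow₀ one_le_two
    have hKEle1 : (K:ℝ) ^ (-(2^τ - 1 : ℤ)) ≤ 1 :=
      zpow_le_one_of_nonpos₀ hKR1 (by omega)
    have hKE0 : (0:ℝ) < (K:ℝ) ^ (-(2^τ - 1 : ℤ)) := zpow_pos hKR0 _
    refine ⟨c' * (K:ℝ) ^ (-(2^τ - 1 : ℤ)) / C', by positivity, fun n hn c hc hne => ?_⟩
    have hnR : (1:ℝ) ≤ (n:ℝ) := by exact_mod_cast hn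
    have hn0 : (n:ℝ) ≠ 0 := by positivity
    set a : (Fin τ → Bool) → ℤ := fun s => c (Fin.snoc s false) with ha
    set b : (Fin τ → Bool) → ℤ := fun s => c (Fin.snoc s true) with hb
    have hsplit : Sw (τ+1) c = Sw τ a + Sw τ b * Real.sqrt p := Sw_split τ c
    have hA := Sw_abs_le τ n a (fun s => hc _)
    have hB := Sw_abs_le τ n b (fun s => hc _)
    have hEle : (-(2^(τ+1) - 1 : ℤ)) ≤ (-(2^τ - 1 : ℤ)) := by
      have h := pow_le_pow_right₀ (by norm_num : (1:ℤ) ≤ 2) (Nat.le_succ τ)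
      omega
    by_cases hAB : Sw τ a - Sw τ b * Real.sqrt p = 0
    · have hBne : Sw τ b ≠ 0 := by
        intro h0
        apply hne
        have hA0 : Sw τ a = 0 := by rw [h0] at hAB; simpa using hAB
        rw [hsplit, h0, hA0]; ring
      have hIB := ih n hn b (fun s => hc _) hBne
      have hw : Sw (τ+1) c = 2 * (Sw τ b * Real.sqrt p) := by
        rw [hsplit]; linarith [hAB]
      have habs : |Sw τ b| ≤ |Sw (τ+1) c| := by
        rw [hw, abs_mul, abs_mul, abs_of_nonneg (Real.sqrt_nonneg _), abs_two]
        nlinarith [abs_nonneg (Sw τ b)]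
      calc c' * (K:ℝ) ^ (-(2^τ - 1 : ℤ)) / C' * (n:ℝ) ^ (-(2^(τ+1) - 1 : ℤ))
          ≤ c' * (n:ℝ) ^ (-(2^τ - 1 : ℤ)) := by
            have h1 : (n:ℝ) ^ (-(2^(τ+1) - 1 : ℤ)) ≤ (n:ℝ) ^ (-(2^τ - 1 : ℤ)) :=
              zpow_le_zpow_right₀ hnR hEle
            have h2 : c' * (K:ℝ) ^ (-(2^τ - 1 : ℤ)) / C' ≤ c' := by
              rw [div_le_iff₀ (by positivity)]
              nlinarith
            exact mul_le_mul h2 h1 (by positivity) hc'pos.le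
        _ ≤ |Sw τ b| := hIB
        _ ≤ |Sw (τ+1) c| := habs
    · set d : (Fin τ → Bool) → ℤ := fun u => ∑ s, (a s * a (fun j => xor (s j) (u j))
          - (p:ℤ) * b s * b (fun j => xor (s j) (u j)))
          * (sqfDiv τ (fun j => s j && xor (s j) (u j)) : ℤ) with hd
      have hkey := key_expand τ p a b
      have hps : Real.sqrt p ^ 2 = (p:ℝ) := Real.sq_sqrt (by positivity)
      have hwd : Sw τ d = Sw (τ+1) c * (Sw τ a - Sw τ b * Real.sqrt p) := by
        rw [← hd] at hkey
        rw [← hkey, hsplit]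
        linear_combination (Sw τ b)^2 * hps
      have hdne : Sw τ d ≠ 0 := by rw [hwd]; exact mul_ne_zero hne hAB
      set N : ℕ := K * n^2 with hN
      have hN1 : 1 ≤ N := Nat.one_le_iff_ne_zero.mpr
        (Nat.mul_ne_zero (by omega) (pow_ne_zero _ (by omega)))
      have hp0 : (0:ℤ) ≤ (p:ℤ) := Int.natCast_nonneg p
      have hdb : ∀ u, |d u| ≤ (N : ℤ) := by
        intro u
        calc |d u| ≤ ∑ s, |(a s * a (fun j => xor (s j) (u j))
              - (p:ℤ) * b s * b (fun j => xor (s j) (u j)))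
              * (sqfDiv τ (fun j => s j && xor (s j) (u j)) : ℤ)| :=
            Finset.abs_sum_le_sum_abs _ _
          _ ≤ ∑ _s : Fin τ → Bool, ((1 + p) * n^2 * Pm : ℤ) := by
              refine Finset.sum_le_sum fun s _ => ?_
              rw [abs_mul]
              have b1 : |a s * a (fun j => xor (s j) (u j))
                  - (p:ℤ) * b s * b (fun j => xor (s j) (u j))| ≤ (1 + p) * n^2 := by
                have h1 := hc (Fin.snoc s false)
                have h2 := hc (Fin.snoc ((fun j => xor (s j) (u j))) false)
                have h3 := hc (Fin.snoc s true)
                have h4 := hc (Fin.snoc ((fun j => xor (s j) (u j))) true)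
                have e1 : |a s| ≤ (n:ℤ) := h1
                have e2 : |a (fun j => xor (s j) (u j))| ≤ (n:ℤ) := h2
                have e3 : |b s| ≤ (n:ℤ) := h3
                have e4 : |b (fun j => xor (s j) (u j))| ≤ (n:ℤ) := h4
                calc |a s * a (fun j => xor (s j) (u j))
                    - (p:ℤ) * b s * b (fun j => xor (s j) (u j))|
                    ≤ |a s * a (fun j => xor (s j) (u j))|
                      + |(p:ℤ) * b s * b (fun j => xor (s j) (u j))| := abs_sub _ _
                  _ ≤ (n:ℤ) * n + p * (n * n) := by
                      rw [abs_mul, abs_mul, abs_mul, abs_of_nonneg hp0, mul_assoc]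
                      have t1 : |a s| * |a (fun j => xor (s j) (u j))| ≤ (n:ℤ) * n :=
                        mul_le_mul e1 e2 (abs_nonneg _) (Int.natCast_nonneg n)
                      have t2 : |b s| * |b (fun j => xor (s j) (u j))| ≤ (n:ℤ) * n :=
                        mul_le_mul e3 e4 (abs_nonneg _) (Int.natCast_nonneg n)
                      exact add_le_add t1 (mul_le_mul_of_nonneg_left t2 hp0)
                  _ ≤ (1 + p) * n^2 := le_of_eq (by ring)
              have b2 : |(sqfDiv τ (fun j => s j && xor (s j) (u j)) : ℤ)| ≤ (Pm:ℤ) := by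
                rw [abs_of_nonneg (Int.natCast_nonneg _)]
                exact_mod_cast sqfDiv_le τ _
              have hnn : (0:ℤ) ≤ (1 + p) * n^2 :=
                mul_nonneg (by linarith) (sq_nonneg _)
              exact mul_le_mul b1 b2 (abs_nonneg _) hnn
          _ = (N:ℤ) := by
              rw [Finset.sum_const, Finset.card_univ]
              simp only [Fintype.card_fun, Fintype.card_bool, Fintype.card_fin, smul_eq_mul]
              rw [hN, hK]
              push_cast
              ring
      have hID := ih N hN1 d hdb hdne
      have hup : |Sw τ a - Sw τ b * Real.sqrt p| ≤ C' * n := by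
        calc |Sw τ a - Sw τ b * Real.sqrt p| ≤ |Sw τ a| + |Sw τ b * Real.sqrt p| := abs_sub _ _
          _ ≤ 2^τ * n * Real.sqrt Pm + 2^τ * n * Real.sqrt Pm * Real.sqrt p := by
              rw [abs_mul, abs_of_nonneg (Real.sqrt_nonneg _)]
              exact add_le_add hA (mul_le_mul_of_nonneg_right hB (Real.sqrt_nonneg _))
          _ = C' * n := by rw [hC']; ring
      have h3 : c' * (N:ℝ) ^ (-(2^τ - 1 : ℤ)) ≤ |Sw (τ+1) c| * (C' * n) := by
        refine hID.trans ?_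
        rw [hwd, abs_mul]
        exact mul_le_mul_of_nonneg_left hup (abs_nonneg _)
      have hNE : (N:ℝ) ^ (-(2^τ - 1 : ℤ))
          = (K:ℝ) ^ (-(2^τ - 1 : ℤ)) * (n:ℝ) ^ (-(2^(τ+1) - 1 : ℤ) + 1) := by
        have hcast : (N:ℝ) = (K:ℝ) * (n:ℝ) ^ (2:ℕ) := by
          rw [hN]; push_cast; ring
        rw [hcast, mul_zpow, ← zpow_natCast (n:ℝ) 2, ← zpow_mul]
        congr 1
        push_cast
        rw [pow_succ]
        ring
      have hid : c' * (K:ℝ) ^ (-(2^τ - 1 : ℤ)) / C' * (n:ℝ) ^ (-(2^(τ+1) - 1 : ℤ)) * (C' * n)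
          = c' * (N:ℝ) ^ (-(2^τ - 1 : ℤ)) := by
        rw [hNE, zpow_add₀ hn0, zpow_one]
        field_simp
      have hCn : (0:ℝ) < C' * (n:ℝ) := by positivity
      exact le_of_mul_le_mul_right (by rw [hid]; exact h3) hCn

theorem stmt_11 (τ : ℕ) :
    ∃ cτ : ℝ, 0 < cτ ∧ ∀ n : ℕ, 1 ≤ n → ∀ c : (Fin τ → Bool) → ℤ,
      (∀ s, |c s| ≤ (n : ℤ)) →
      (∑ s, (c s : ℝ) * Real.sqrt (sqfDiv τ s)) ≠ 0 →
      cτ * (n : ℝ) ^ (-(2 ^ τ - 1 : ℤ)) ≤ |∑ s, (c s : ℝ) * Real.sqrt (sqfDiv τ s)| := by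
  obtain ⟨cτ, h1, h2⟩ := main τ
  exact ⟨cτ, h1, h2⟩
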